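/- Let G be a finite group acting on a finite set Q, H ≤ G, and q ∈ Q. If |G·q| / |H·q| = |G| / |H| (i.e., q is well-behaved for H), then the orbit G·q is the disjoint union of the sets Cᵢ(q) = {g(q) | g ∈ Cᵢ} over the left cosets Cᵢ of H, and these sets are pairwise disjoint, each of cardinality |H·q|. -/

import Mathlib

open Pointwise MulAction

theorem wb_orbit_stab (G Q : Type*) [Group G] [Finite G] [MulAction G Q] (q : Q) :
    Nat.card (orbit G q) * Nat.card (stabilizer G q) = Nat.card G := by
  rw [← Nat.card_prod]
  exact Nat.card_congr (orbitProdStabilizerEquivGroup G q)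

theorem wb_image_card (G Q : Type*) [Group G] [MulAction G Q] (q : Q) (g₀ : G)
    (H : Subgroup G) :
    Nat.card ((fun g => g • q) '' (g₀ • (H : Set G))) = Nat.card (orbit H q) := by
  have h1 : (fun g => g • q) '' (g₀ • (H : Set G)) = g₀ • ((fun g => g • q) '' (H : Set G)) := by
    ext x
    simp only [Set.mem_image, Set.mem_smul_set]
    constructor
    · rintro ⟨g, ⟨h, hh, rfl⟩, rfl⟩
      exact ⟨h • q, ⟨h, hh, rfl⟩, (mul_smul g₀ h q).symm⟩
    · rintro ⟨_, ⟨h, hh, rfl⟩, rfl⟩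
      exact ⟨g₀ * h, ⟨h, hh, rfl⟩, mul_smul g₀ h q⟩
  have h2 : (fun g => g • q) '' (H : Set G) = orbit H q := by
    ext x
    simp [MulAction.mem_orbit_iff, Subgroup.smul_def, eq_comm]
  rw [h1, h2]
  exact Nat.card_image_of_injective (MulAction.injective g₀) _

/-- Well-behavedness implies the stabilizer of `q` is contained in `H`. -/
theorem wb_stab_le (G Q : Type*) [Group G] [Finite G] [MulAction G Q]
    [Finite Q] (H : Subgroup G) (q : Q)
    (hwb : Nat.card (orbit G q) / Nat.card (orbit H q) = Nat.card G / Nat.card H) :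
    stabilizer G q ≤ H := by
  set a := Nat.card (orbit G q) with ha
  set b := Nat.card (orbit H q) with hb
  set s := Nat.card (stabilizer G q) with hs
  set t := Nat.card (stabilizer H q) with ht
  have key1 : a * s = Nat.card G := wb_orbit_stab G Q q
  have key2 : b * t = Nat.card H := wb_orbit_stab H Q q
  -- the natural injection from stabilizer H q to stabilizer G q
  have hmem : ∀ x : stabilizer H q, (x : H) • q = q := fun x => x.2
  let φ : stabilizer H q → stabilizer G q := fun x =>
    ⟨((x : H) : G), by
      have := hmem x
      rwa [Subgroup.smul_def] at this⟩
  have hφinj : Function.Injective φ := by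
    intro x y hxy
    simp only [φ, Subtype.mk.injEq] at hxy
    exact Subtype.ext (Subtype.ext (congrArg (fun z : stabilizer G q => (z : G)) hxy))
  have key3 : t ≤ s := Nat.card_le_card_of_injective φ hφinj
  have hapos : 0 < a := Nat.card_pos_iff.mpr ⟨⟨⟨q, mem_orbit_self q⟩⟩, Subtype.finite⟩
  have hbpos : 0 < b := Nat.card_pos_iff.mpr ⟨⟨⟨q, mem_orbit_self q⟩⟩, Subtype.finite⟩
  have hGpos : 0 < Nat.card G := Nat.card_pos
  have hHpos : 0 < Nat.card H := Nat.card_pos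
  have hdvd : Nat.card H ∣ Nat.card G := Subgroup.card_subgroup_dvd_card H
  -- counting argument: t = s
  have hle : (Nat.card G / Nat.card H) * b ≤ a := by
    rw [← hwb]; exact Nat.div_mul_le_self a b
  have hchain : Nat.card G ≤ a * t := by
    calc Nat.card G = (Nat.card G / Nat.card H) * Nat.card H := (Nat.div_mul_cancel hdvd).symm
    _ = (Nat.card G / Nat.card H) * (b * t) := by rw [key2]
    _ = ((Nat.card G / Nat.card H) * b) * t := by ring
    _ ≤ a * t := Nat.mul_le_mul_right t hle
  have hts : a * s ≤ a * t := key1 ▸ hchain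
  have hst : s = t := le_antisymm (Nat.le_of_mul_le_mul_left hts hapos) key3
  -- so φ is bijective, hence stabilizer G q ≤ H
  have hφbij : Function.Bijective φ :=
    (Nat.bijective_iff_injective_and_card φ).mpr ⟨hφinj, hst.symm⟩
  intro x hx
  obtain ⟨y, hy⟩ := hφbij.2 ⟨x, hx⟩
  have : ((y : H) : G) = x := congrArg Subtype.val hy
  exact this ▸ (y : H).2

/-- Let a finite group `G` act on a finite set `Q`, `H ≤ G`, and `q ∈ Q`.  If `q` is
well-behaved for `H`, i.e. `|G·q| / |H·q| = |G| / |H|`, then the orbit `G·q` is the disjoint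
union of the sets `Cᵢ(q) = {g • q | g ∈ Cᵢ}` over the left cosets `Cᵢ` of `H`: these sets
cover the orbit, sets from distinct cosets are disjoint, and each has cardinality `|H·q|`. -/
theorem wellBehaved_orbit_decomposition (G Q : Type*) [Group G] [Finite G] [MulAction G Q]
    [Finite Q] (H : Subgroup G) (q : Q)
    (hwb : Nat.card (orbit G q) / Nat.card (orbit H q) = Nat.card G / Nat.card H) :
    (⋃ g₀ : G, (fun g => g • q) '' (g₀ • (H : Set G))) = orbit G q ∧
    (∀ g₀ g₁ : G, g₀ • (H : Set G) ≠ g₁ • (H : Set G) →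
      Disjoint ((fun g => g • q) '' (g₀ • (H : Set G)))
        ((fun g => g • q) '' (g₁ • (H : Set G)))) ∧
    (∀ g₀ : G, Nat.card ((fun g => g • q) '' (g₀ • (H : Set G))) =
      Nat.card (orbit H q)) := by
  have hS : stabilizer G q ≤ H := wb_stab_le G Q H q hwb
  refine ⟨?_, ?_, fun g₀ => wb_image_card G Q q g₀ H⟩
  · ext x
    simp only [Set.mem_iUnion, Set.mem_image, Set.mem_smul_set, MulAction.mem_orbit_iff]
    constructor
    · rintro ⟨g₀, g, ⟨h, hh, rfl⟩, rfl⟩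
      exact ⟨g₀ * h, rfl⟩
    · rintro ⟨g, rfl⟩
      exact ⟨g, g, ⟨1, H.one_mem, by simp⟩, rfl⟩
  · intro g₀ g₁ hne
    rw [Set.disjoint_left]
    rintro x ⟨g, ⟨h₀, hh₀, rfl⟩, hx⟩ ⟨g', ⟨h₁, hh₁, rfl⟩, hx'⟩
    apply hne
    rw [leftCoset_eq_iff]
    have heq : (g₀ • h₀) • q = (g₁ • h₁) • q := hx.trans hx'.symm
    have hstab : (g₁ • h₁)⁻¹ * (g₀ • h₀) ∈ stabilizer G q := by
      rw [MulAction.mem_stabilizer_iff, mul_smul, heq, inv_smul_smul]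
    have hH : (g₁ • h₁)⁻¹ * (g₀ • h₀) ∈ H := hS hstab
    have : g₀⁻¹ * g₁ ∈ H := by
      have h' : h₁ * ((g₁ • h₁)⁻¹ * (g₀ • h₀)) * h₀⁻¹ = g₁⁻¹ * g₀ := by
        simp [smul_eq_mul, mul_assoc]
      have : g₁⁻¹ * g₀ ∈ H := h' ▸ H.mul_mem (H.mul_mem hh₁ hH) (H.inv_mem hh₀)
      simpa using H.inv_mem this
    exact this
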